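/- Let pi_N: Sym -> Sym be the linear map defined on the basis S^I by pi_N(S^I) = Sigma_I^{(N)} if I lies in G^{(N)} (all parts in [1,N], last part in [1,N-1]) and pi_N(S^I) = 0 otherwise. Then for all compositions I in G^{(N)} and all compositions J, pi_N(S^I * S^J) = pi_N(S^I) * pi_N(S^J). -/

import Mathlib

open scoped Classical

noncomputable section

/-- The algebra of noncommutative symmetric functions, realized as the free
associative algebra over `ℂ` on generators `S_1, S_2, …` (indexed by `ℕ`,
the index `0` being unused). -/
abbrev NSym : Type := FreeAlgebra ℂ ℕ

/-- The complete noncommutative symmetric function `S_n`, with `S_0 = 1`. -/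
def Sg (n : ℕ) : NSym := if n = 0 then 1 else FreeAlgebra.ι ℂ n

/-- `S^I = S_{i_1} ⋯ S_{i_r}` for a composition `I` (a list of parts). -/
def SWord (I : List ℕ) : NSym := (I.map Sg).prod

/-- The list of all coarsenings of a composition (obtained by merging
adjacent blocks). -/
def coarse : List ℕ → List (List ℕ)
  | [] => [[]]
  | [a] => [[a]]
  | a :: b :: l => ((coarse (b :: l)).map (fun K => a :: K)) ++ coarse ((a + b) :: l)
termination_by l => l.length
decreasing_by all_goals simp

/-- The noncommutative ribbon Schur function
`R_I = ∑_{J ⪯ I} (-1)^{ℓ(I) - ℓ(J)} S^J`, the sum ranging over all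
coarsenings `J` of `I`. -/
def Rib (I : List ℕ) : NSym :=
  ((coarse I).map (fun J => ((-1 : ℂ) ^ (I.length - J.length)) • SWord J)).sum

/-- One elementary step of the order `≤_{P^{(N)}}`: replace one part `m + k`
by the pair `(m, k)` with `m ∈ [1, N-1]` and `k ≥ 1`. -/
def splitStep (N : ℕ) (I J : List ℕ) : Prop :=
  ∃ (L R : List ℕ) (m k : ℕ), 1 ≤ m ∧ m ≤ N - 1 ∧ 1 ≤ k ∧
    I = L ++ (m + k) :: R ∧ J = L ++ m :: k :: R

/-- `peakLE N J I` means `J ≤_{P^{(N)}} I`, i.e. `I` can be obtained from `J`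
by successively splitting parts `i` into `(m, i - m)` with `m ∈ [1, N-1]`. -/
def peakLE (N : ℕ) (J I : List ℕ) : Prop :=
  Relation.ReflTransGen (splitStep N) J I

/-- The complete peak function of order `N`:
`Σ^{(N)}_I = ∑_{J ≤_{P^{(N)}} I} R_J`. (Every `J ≤_{P^{(N)}} I` is a
coarsening of `I`, so the sum may be taken over coarsenings of `I`.) -/
def SigmaP (N : ℕ) (I : List ℕ) : NSym :=
  ((coarse I).map (fun J => if peakLE N J I then Rib J else 0)).sum

/-- Membership in `G^{(N)}`: all parts lie in `[1, N]` and the last part lies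
in `[1, N-1]`. -/
def memG (N : ℕ) (I : List ℕ) : Prop :=
  (∀ p ∈ I, 1 ≤ p ∧ p ≤ N) ∧ (∀ p, I.getLast? = some p → p ≤ N - 1)

end


open scoped Classical

lemma SWord_nil : SWord [] = 1 := rfl
lemma SWord_cons (a : ℕ) (l : List ℕ) : SWord (a :: l) = Sg a * SWord l := by
  simp [SWord]
lemma SWord_append (I J : List ℕ) : SWord (I ++ J) = SWord I * SWord J := by
  simp [SWord]

lemma coarse_nil : coarse [] = [[]] := by simp [coarse]
lemma coarse_single (a : ℕ) : coarse [a] = [[a]] := by simp [coarse]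
lemma coarse_cons_cons (a b : ℕ) (l : List ℕ) :
    coarse (a :: b :: l) = ((coarse (b :: l)).map (fun K => a :: K)) ++ coarse ((a + b) :: l) := by
  rw [coarse]

lemma coarse_shape : ∀ (l : List ℕ) (a : ℕ) (K : List ℕ), K ∈ coarse (a :: l) →
    ∃ d K', K = (a + d) :: K'
  | [], a, K, h => by
      rw [coarse_single] at h; simp at h; exact ⟨0, [], by simp [h]⟩
  | b :: l, a, K, h => by
      rw [coarse_cons_cons] at h
      rcases List.mem_append.1 h with h | h
      · rcases List.mem_map.1 h with ⟨K', _, rfl⟩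
        exact ⟨0, K', by simp⟩
      · rcases coarse_shape l (a + b) K h with ⟨d, K', rfl⟩
        exact ⟨b + d, K', by ring_nf⟩

lemma coarse_length_le : ∀ (l : List ℕ) (K : List ℕ), K ∈ coarse l → K.length ≤ l.length
  | [], K, h => by rw [coarse_nil] at h; simp at h; simp [h]
  | [a], K, h => by rw [coarse_single] at h; simp at h; simp [h]
  | a :: b :: l, K, h => by
      rw [coarse_cons_cons] at h
      rcases List.mem_append.1 h with h | h
      · rcases List.mem_map.1 h with ⟨K', hK', rfl⟩
        have := coarse_length_le (b :: l) K' hK'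
        simpa using this
      · have := coarse_length_le ((a + b) :: l) K h
        simp at this ⊢; omega

lemma Rib_nil : Rib [] = 1 := by
  simp [Rib, coarse_nil, SWord_nil]

lemma Rib_single (a : ℕ) : Rib [a] = Sg a := by
  simp [Rib, coarse_single, SWord_cons, SWord_nil]

lemma list_sum_map_sub {ι : Type*} (l : List ι) (f g : ι → NSym) :
    (l.map (fun x => f x - g x)).sum = (l.map f).sum - (l.map g).sum := by
  induction l with
  | nil => simp
  | cons x l ih => simp [ih]; abel

lemma list_sum_map_neg {ι : Type*} (l : List ι) (f : ι → NSym) :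
    (l.map (fun x => - f x)).sum = - (l.map f).sum := by
  induction l with
  | nil => simp
  | cons x l ih => simp [ih]; abel

lemma list_sum_map_mul_left {ι : Type*} (l : List ι) (r : NSym) (f : ι → NSym) :
    (l.map (fun x => r * f x)).sum = r * (l.map f).sum := by
  induction l with
  | nil => simp
  | cons x l ih => simp [ih, mul_add]

lemma Rib_rec (a b : ℕ) (l : List ℕ) :
    Rib (a :: b :: l) = Sg a * Rib (b :: l) - Rib ((a + b) :: l) := by
  rw [Rib, coarse_cons_cons, List.map_append, List.sum_append, List.map_map]
  have h1 : ((coarse (b :: l)).map ((fun J => ((-1 : ℂ) ^ ((a :: b :: l).length - J.length)) • SWord J) ∘ (fun K => a :: K))).sum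
      = Sg a * Rib (b :: l) := by
    rw [Rib, ← list_sum_map_mul_left]
    apply congrArg
    apply List.map_congr_left
    intro K hK
    have hlen := coarse_length_le (b :: l) K hK
    have hexp : (a :: b :: l).length - (a :: K).length = (b :: l).length - K.length := by
      simp
    simp only [Function.comp_apply, SWord_cons, hexp, mul_smul_comm]
  have h2 : ((coarse ((a + b) :: l)).map (fun J => ((-1 : ℂ) ^ ((a :: b :: l).length - J.length)) • SWord J)).sum
      = - Rib ((a + b) :: l) := by
    rw [Rib, ← list_sum_map_neg]
    apply congrArg
    apply List.map_congr_left
    intro K hK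
    have hlen := coarse_length_le ((a + b) :: l) K hK
    have h3 : (a :: b :: l).length - K.length = (((a + b) :: l).length - K.length) + 1 := by
      simp at hlen ⊢; omega
    rw [h3, pow_succ]
    simp [neg_smul]
  rw [h1, h2, sub_eq_add_neg]

/-- Good coarsenings of `acc :: l` where the current block has accumulated
sum `acc` and last original part `p`. -/
def gl (N : ℕ) : ℕ → ℕ → List ℕ → List (List ℕ)
  | acc, _, [] => [[acc]]
  | acc, p, b :: l =>
      ((gl N b b l).map (fun K => acc :: K)) ++
        (if 1 ≤ p ∧ p ≤ N - 1 then gl N (acc + b) b l else [])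

lemma gl_nil (N acc p : ℕ) : gl N acc p [] = [[acc]] := rfl

lemma gl_cons (N acc p b : ℕ) (l : List ℕ) :
    gl N acc p (b :: l) = ((gl N b b l).map (fun K => acc :: K)) ++
      (if 1 ≤ p ∧ p ≤ N - 1 then gl N (acc + b) b l else []) := rfl

lemma gl_shape (N : ℕ) : ∀ (l : List ℕ) (acc p : ℕ) (K : List ℕ), K ∈ gl N acc p l →
    ∃ d K', K = (acc + d) :: K'
  | [], acc, p, K, h => by
      rw [gl_nil] at h; simp at h; exact ⟨0, [], by simp [h]⟩
  | b :: l, acc, p, K, h => by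
      rw [gl_cons] at h
      rcases List.mem_append.1 h with h | h
      · rcases List.mem_map.1 h with ⟨K', _, rfl⟩
        exact ⟨0, K', by simp⟩
      · split_ifs at h with hc
        · rcases gl_shape N l (acc + b) b K h with ⟨d, K', rfl⟩
          exact ⟨b + d, K', by ring_nf⟩
        · simp at h

lemma gl_addHead (N : ℕ) : ∀ (l : List ℕ) (w b p : ℕ),
    gl N (w + b) p l = (gl N b p l).map (fun K => (w + K.headI) :: K.tail)
  | [], w, b, p => by simp [gl_nil]
  | c :: l, w, b, p => by
      rw [gl_cons, gl_cons, List.map_append, List.map_map]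
      refine congrArg₂ (· ++ ·) ?_ ?_
      · apply List.map_congr_left
        intro K hK
        simp
      · split_ifs with hc
        · have := gl_addHead N l w (b + c) c
          rw [← add_assoc] at this
          exact this
        · simp

lemma gl_self (N : ℕ) : ∀ (l : List ℕ) (acc p : ℕ), acc :: l ∈ gl N acc p l
  | [], acc, p => by simp [gl_nil]
  | b :: l, acc, p => by
      rw [gl_cons]
      exact List.mem_append_left _ (List.mem_map.2 ⟨b :: l, gl_self N l b b, rfl⟩)

lemma gl_sub_coarse (N : ℕ) : ∀ (l : List ℕ) (acc p : ℕ) (K : List ℕ),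
    K ∈ gl N acc p l → K ∈ coarse (acc :: l)
  | [], acc, p, K, h => by
      rw [gl_nil] at h; rw [coarse_single]; simpa using h
  | b :: l, acc, p, K, h => by
      rw [gl_cons] at h
      rw [coarse_cons_cons]
      rcases List.mem_append.1 h with h | h
      · rcases List.mem_map.1 h with ⟨K', hK', rfl⟩
        exact List.mem_append_left _ (List.mem_map.2 ⟨K', gl_sub_coarse N l b b K' hK', rfl⟩)
      · split_ifs at h with hc
        · exact List.mem_append_right _ (gl_sub_coarse N l (acc + b) b K h)
        · simp at h

lemma gl_merge_closed (N : ℕ) : ∀ (l : List ℕ) (acc p : ℕ) (L R : List ℕ) (m k : ℕ),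
    1 ≤ p → p ≤ acc → (∀ x ∈ l, 1 ≤ x) →
    L ++ m :: k :: R ∈ gl N acc p l → 1 ≤ m → m ≤ N - 1 →
    L ++ (m + k) :: R ∈ gl N acc p l
  | [], acc, p, L, R, m, k, hp, hpa, hl, h, hm1, hm2 => by
      exfalso
      rw [gl_nil] at h
      simp at h
      have := congrArg List.length h
      simp at this
      omega
  | b :: l, acc, p, L, R, m, k, hp, hpa, hl, h, hm1, hm2 => by
      have hb : 1 ≤ b := hl b (by simp)
      have hl' : ∀ x ∈ l, 1 ≤ x := fun x hx => hl x (by simp [hx])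
      rw [gl_cons] at h
      rw [gl_cons]
      rcases List.mem_append.1 h with h | h
      · rcases List.mem_map.1 h with ⟨K', hK', hEq⟩
        cases L with
        | nil =>
          simp only [List.nil_append] at hEq
          injection hEq with h1 h2
          subst h2
          subst h1
          refine List.mem_append_right _ ?_
          rw [if_pos ⟨hp, le_trans hpa hm2⟩]
          rw [gl_addHead N l acc b b]
          exact List.mem_map.2 ⟨k :: R, hK', by simp⟩
        | cons a0 L' =>
          simp only [List.cons_append] at hEq
          injection hEq with h1 h2
          subst h2
          subst h1
          have hmem : L' ++ (m + k) :: R ∈ gl N b b l :=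
            gl_merge_closed N l b b L' R m k hb le_rfl hl' hK' hm1 hm2
          exact List.mem_append_left _ (List.mem_map.2 ⟨L' ++ (m + k) :: R, hmem, by simp⟩)
      · split_ifs at h with hc
        · have hmem : L ++ (m + k) :: R ∈ gl N (acc + b) b l :=
            gl_merge_closed N l (acc + b) b L R m k hb (by omega) hl' h hm1 hm2
          rw [if_pos hc]
          exact List.mem_append_right _ hmem
        · simp at h

lemma splitStep_cons {N : ℕ} {A B : List ℕ} (x : ℕ) (h : splitStep N A B) :
    splitStep N (x :: A) (x :: B) := by
  obtain ⟨L, R, m, k, h1, h2, h3, h4, h5⟩ := h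
  exact ⟨x :: L, R, m, k, h1, h2, h3, by simp [h4], by simp [h5]⟩

lemma peakLE_cons {N : ℕ} {A B : List ℕ} (x : ℕ) (h : peakLE N A B) :
    peakLE N (x :: A) (x :: B) :=
  Relation.ReflTransGen.lift (fun K => x :: K) (fun _ _ hs => splitStep_cons x hs) _ _ h

lemma gl_peakLE (N : ℕ) : ∀ (l : List ℕ) (a : ℕ) (J : List ℕ),
    (∀ x ∈ l, 1 ≤ x) → J ∈ gl N a a l → peakLE N J (a :: l)
  | [], a, J, hl, h => by
      rw [gl_nil] at h
      simp at h
      rw [h]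
      exact Relation.ReflTransGen.refl
  | b :: l, a, J, hl, h => by
      have hb : 1 ≤ b := hl b (by simp)
      have hl' : ∀ x ∈ l, 1 ≤ x := fun x hx => hl x (by simp [hx])
      rw [gl_cons] at h
      rcases List.mem_append.1 h with h | h
      · rcases List.mem_map.1 h with ⟨J', hJ', rfl⟩
        exact peakLE_cons a (gl_peakLE N l b J' hl' hJ')
      · split_ifs at h with hc
        · rw [gl_addHead N l a b b] at h
          rcases List.mem_map.1 h with ⟨J', hJ', rfl⟩
          obtain ⟨d, K, rfl⟩ := gl_shape N l b b J' hJ'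
          have hstep : splitStep N ((a + ((b + d) :: K).headI) :: ((b + d) :: K).tail)
              (a :: (b + d) :: K) := by
            refine ⟨[], K, a, b + d, hc.1, hc.2, by omega, by simp [add_assoc], by simp⟩
          exact Relation.ReflTransGen.head hstep
            (peakLE_cons a (gl_peakLE N l b ((b + d) :: K) hl' hJ'))
        · simp at h

lemma peakLE_gl (N : ℕ) (a : ℕ) (l : List ℕ) (hpos : ∀ x ∈ a :: l, 1 ≤ x)
    (J : List ℕ) (h : peakLE N J (a :: l)) : J ∈ gl N a a l := by
  unfold peakLE at h
  induction h using Relation.ReflTransGen.head_induction_on with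
  | refl => exact gl_self N l a a
  | head hstep _ ih =>
      obtain ⟨L, R, m, k, hm1, hm2, hk, h4, h5⟩ := hstep
      rw [h4]
      rw [h5] at ih
      exact gl_merge_closed N l a a L R m k (hpos a (by simp))
        le_rfl (fun x hx => hpos x (by simp [hx])) ih hm1 hm2

lemma coarse_nodup : ∀ (l : List ℕ) (a : ℕ), (∀ x ∈ l, 1 ≤ x) → (coarse (a :: l)).Nodup
  | [], a, _ => by rw [coarse_single]; simp
  | b :: l, a, hl => by
      have hb : 1 ≤ b := hl b (by simp)
      have hl' : ∀ x ∈ l, 1 ≤ x := fun x hx => hl x (by simp [hx])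
      rw [coarse_cons_cons]
      refine List.Nodup.append ?_ (coarse_nodup l (a + b) hl') ?_
      · exact (coarse_nodup l b hl').map (fun K K' h => by injection h)
      · intro K h1 h2
        rcases List.mem_map.1 h1 with ⟨K', _, rfl⟩
        obtain ⟨d, K'', hEq⟩ := coarse_shape l (a + b) _ h2
        injection hEq with h3 _
        omega

lemma gl_nodup (N : ℕ) : ∀ (l : List ℕ) (acc p : ℕ), (∀ x ∈ l, 1 ≤ x) → (gl N acc p l).Nodup
  | [], acc, p, _ => by rw [gl_nil]; simp
  | b :: l, acc, p, hl => by
      have hb : 1 ≤ b := hl b (by simp)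
      have hl' : ∀ x ∈ l, 1 ≤ x := fun x hx => hl x (by simp [hx])
      rw [gl_cons]
      refine List.Nodup.append ?_ ?_ ?_
      · exact (gl_nodup N l b b hl').map (fun K K' h => by injection h)
      · split_ifs
        · exact gl_nodup N l (acc + b) b hl'
        · simp
      · intro K h1 h2
        rcases List.mem_map.1 h1 with ⟨K', _, rfl⟩
        split_ifs at h2 with hc
        · obtain ⟨d, K'', hEq⟩ := gl_shape N l (acc + b) b _ h2
          injection hEq with h3 _
          omega
        · simp at h2

lemma sum_ite_mem (c g : List (List ℕ)) (f : List ℕ → NSym)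
    (hsub : g ⊆ c) (hc : c.Nodup) (hg : g.Nodup) :
    (c.map fun J => if J ∈ g then f J else 0).sum = (g.map f).sum := by
  have h1 : ∀ c' : List (List ℕ),
      (c'.map fun J => if J ∈ g then f J else 0).sum = ((c'.filter (· ∈ g)).map f).sum := by
    intro c'
    induction c' with
    | nil => simp
    | cons x c' ih =>
        by_cases hx : x ∈ g
        · simp [List.filter_cons, hx, ih]
        · simp [List.filter_cons, hx, ih]
  rw [h1]
  have h2 : (c.filter (· ∈ g)).Perm g := by
    apply List.Subperm.antisymm
    · exact List.Nodup.subperm (hc.filter _)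
        (fun x hx => by simpa using (List.mem_filter.1 hx).2)
    · exact List.Nodup.subperm hg
        (fun x hx => List.mem_filter.2 ⟨hsub hx, by simpa using hx⟩)
  exact (h2.map f).sum_eq

/-- `Fg N acc p l` : partial peak sum. -/
def Fg (N acc p : ℕ) (l : List ℕ) : NSym := ((gl N acc p l).map Rib).sum

lemma SigmaP_nil (N : ℕ) : SigmaP N [] = 1 := by
  rw [SigmaP, coarse_nil]
  simp [Rib_nil, peakLE]
  exact Relation.ReflTransGen.refl

lemma SigmaP_cons (N : ℕ) (a : ℕ) (l : List ℕ) (hpos : ∀ x ∈ a :: l, 1 ≤ x) :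
    SigmaP N (a :: l) = Fg N a a l := by
  rw [SigmaP, Fg]
  have hl' : ∀ x ∈ l, 1 ≤ x := fun x hx => hpos x (by simp [hx])
  have hiff : ∀ J, peakLE N J (a :: l) ↔ J ∈ gl N a a l := fun J =>
    ⟨peakLE_gl N a l hpos J, gl_peakLE N l a J hl'⟩
  have : ((coarse (a :: l)).map (fun J => if peakLE N J (a :: l) then Rib J else 0))
      = ((coarse (a :: l)).map (fun J => if J ∈ gl N a a l then Rib J else 0)) := by
    apply List.map_congr_left
    intro J _
    by_cases h : peakLE N J (a :: l)
    · rw [if_pos h, if_pos ((hiff J).1 h)]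
    · rw [if_neg h, if_neg (fun hm => h ((hiff J).2 hm))]
  rw [this]
  exact sum_ite_mem _ _ _ (fun K hK => gl_sub_coarse N l a a K hK)
    (coarse_nodup l a hl') (gl_nodup N l a a hl')

lemma Fg_nil' (N acc p : ℕ) : Fg N acc p [] = Sg acc := by
  simp [Fg, gl_nil, Rib_single]

lemma Fg_cons_expand (N acc p b : ℕ) (l : List ℕ) :
    Fg N acc p (b :: l) = ((gl N b b l).map (fun J => Rib (acc :: J))).sum +
      (if 1 ≤ p ∧ p ≤ N - 1 then Fg N (acc + b) b l else 0) := by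
  rw [Fg, gl_cons, List.map_append, List.sum_append, List.map_map]
  congr 1
  split_ifs
  · rfl
  · simp

lemma ribCons (N : ℕ) : ∀ (l : List ℕ) (acc b p : ℕ),
    ((gl N b p l).map (fun J => Rib (acc :: J))).sum = Sg acc * Fg N b p l - Fg N (acc + b) p l
  | [], acc, b, p => by
      rw [gl_nil, Fg_nil', Fg_nil']
      simp only [List.map_cons, List.map_nil, List.sum_cons, List.sum_nil, add_zero]
      rw [Rib_rec acc b [], Rib_single, Rib_single]
  | c :: l, acc, b, p => by
      rw [gl_cons, List.map_append, List.sum_append, List.map_map]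
      have e1 : ((gl N c c l).map ((fun J => Rib (acc :: J)) ∘ (fun K => b :: K))) =
          ((gl N c c l).map (fun J => Sg acc * Rib (b :: J) - Rib ((acc + b) :: J))) :=
        List.map_congr_left (fun J _ => Rib_rec acc b J)
      rw [e1, list_sum_map_sub, list_sum_map_mul_left,
        ribCons N l b c c, ribCons N l (acc + b) c c,
        Fg_cons_expand N b p c l, Fg_cons_expand N (acc + b) p c l,
        ribCons N l b c c, ribCons N l (acc + b) c c]
      have e2 : ((if 1 ≤ p ∧ p ≤ N - 1 then gl N (b + c) c l else []).map
            (fun J => Rib (acc :: J))).sum =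
          (if 1 ≤ p ∧ p ≤ N - 1 then
            Sg acc * Fg N (b + c) c l - Fg N (acc + (b + c)) c l else 0) := by
        split_ifs
        · exact ribCons N l acc (b + c) c
        · simp
      rw [e2]
      have ha : acc + (b + c) = acc + b + c := by ring
      rw [ha]
      by_cases hc : 1 ≤ p ∧ p ≤ N - 1
      · simp only [if_pos hc]
        noncomm_ring
      · simp only [if_neg hc]
        noncomm_ring

lemma Fg_rec (N acc p b : ℕ) (l : List ℕ) :
    Fg N acc p (b :: l) = Sg acc * Fg N b b l -
      (if 1 ≤ p ∧ p ≤ N - 1 then 0 else Fg N (acc + b) b l) := by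
  rw [Fg_cons_expand, ribCons N l acc b b]
  by_cases hc : 1 ≤ p ∧ p ≤ N - 1
  · simp only [if_pos hc]
    abel
  · simp only [if_neg hc]
    abel

lemma Fg_append (N : ℕ) (j : ℕ) (J' : List ℕ) : ∀ (l : List ℕ) (acc p : ℕ),
    1 ≤ l.getLastD p → l.getLastD p ≤ N - 1 →
    Fg N acc p (l ++ j :: J') = Fg N acc p l * Fg N j j J'
  | [], acc, p, h1, h2 => by
      rw [List.nil_append, Fg_rec, Fg_nil']
      simp only [List.getLastD_nil] at h1 h2
      rw [if_pos ⟨h1, h2⟩, sub_zero]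
  | b :: l, acc, p, h1, h2 => by
      rw [List.getLastD_cons] at h1 h2
      rw [List.cons_append, Fg_rec, Fg_rec,
        Fg_append N j J' l b b h1 h2, Fg_append N j J' l (acc + b) b h1 h2]
      rw [sub_mul, mul_assoc, ite_mul, zero_mul]

lemma lastMem {l : List ℕ} {a : ℕ} (h : l.getLast? = some a) : a ∈ l := by
  obtain ⟨hne, rfl⟩ := List.mem_getLast?_eq_getLast (Option.mem_def.2 h)
  exact List.getLast_mem hne

lemma SigmaP_mul (N : ℕ) (I J : List ℕ) (hIpos : ∀ x ∈ I, 1 ≤ x) (hJpos : ∀ x ∈ J, 1 ≤ x)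
    (hlast : ∀ p, I.getLast? = some p → p ≤ N - 1) :
    SigmaP N (I ++ J) = SigmaP N I * SigmaP N J := by
  cases I with
  | nil => rw [List.nil_append, SigmaP_nil, one_mul]
  | cons a l =>
    cases J with
    | nil => rw [List.append_nil, SigmaP_nil, mul_one]
    | cons j J' =>
      have hpos2 : ∀ x ∈ a :: (l ++ j :: J'), 1 ≤ x := by
        intro x hx
        rcases List.mem_cons.1 hx with rfl | hx
        · exact hIpos x (by simp)
        · rcases List.mem_append.1 hx with hx | hx
          · exact hIpos x (by simp [hx])
          · exact hJpos x hx
      rw [List.cons_append, SigmaP_cons N a (l ++ j :: J') hpos2,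
        SigmaP_cons N a l hIpos, SigmaP_cons N j J' hJpos]
      have hlval : (a :: l).getLast? = some (l.getLastD a) := by
        rw [List.getLast?_cons, List.getLastD_eq_getLast?]
      have h2 : l.getLastD a ≤ N - 1 := hlast _ hlval
      have h1 : 1 ≤ l.getLastD a := hIpos _ (lastMem hlval)
      exact Fg_append N j J' l a a h1 h2

lemma memG_nil (N : ℕ) : memG N [] := ⟨by simp, by simp⟩

lemma memG_append {N : ℕ} {I J : List ℕ} (hI : memG N I) (hJ : memG N J) :
    memG N (I ++ J) := by
  constructor
  · intro p hp
    rcases List.mem_append.1 hp with hp | hp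
    · exact hI.1 p hp
    · exact hJ.1 p hp
  · intro p hp
    cases J with
    | nil => rw [List.append_nil] at hp; exact hI.2 p hp
    | cons j J' =>
        rw [List.getLast?_append_of_ne_nil I (by simp)] at hp
        exact hJ.2 p hp

lemma memG_right {N : ℕ} {I J : List ℕ} (hJne : J ≠ []) (h : memG N (I ++ J)) :
    memG N J := by
  constructor
  · intro p hp
    exact h.1 p (List.mem_append_right I hp)
  · intro p hp
    apply h.2 p
    rw [List.getLast?_append_of_ne_nil I hJne]
    exact hp

open scoped Classical

/-- Let `π_N : Sym → Sym` be the linear map defined on the basis `S^I` by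
`π_N(S^I) = Σ^{(N)}_I` if `I ∈ G^{(N)}` and `π_N(S^I) = 0` otherwise. Then for
every composition `I ∈ G^{(N)}` and every composition `J`,
`π_N(S^I S^J) = π_N(S^I) π_N(S^J)`. -/
theorem piN_multiplicative (N : ℕ) (hN : 1 ≤ N) (π : NSym →ₗ[ℂ] NSym)
    (hπ : ∀ I : List ℕ, (∀ p ∈ I, 0 < p) →
      π (SWord I) = if memG N I then SigmaP N I else 0)
    (I J : List ℕ) (hI : memG N I)
    (hJpos : ∀ p ∈ J, 0 < p) :
    π (SWord I * SWord J) = π (SWord I) * π (SWord J) := by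
  have hIpos : ∀ p ∈ I, 0 < p := fun p hp => (hI.1 p hp).1
  have hIJpos : ∀ p ∈ I ++ J, 0 < p := by
    intro p hp
    rcases List.mem_append.1 hp with hp | hp
    · exact hIpos p hp
    · exact hJpos p hp
  rw [← SWord_append, hπ _ hIJpos, hπ I hIpos, hπ J hJpos, if_pos hI]
  by_cases hJG : memG N J
  · rw [if_pos hJG, if_pos (memG_append hI hJG)]
    exact SigmaP_mul N I J hIpos hJpos hI.2
  · have hJne : J ≠ [] := fun h => hJG (h ▸ memG_nil N)
    rw [if_neg hJG, if_neg (fun hIJ => hJG (memG_right hJne hIJ)), mul_zero]
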